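/- Let φ : G → G' be a half-isomorphism of groups and let X be a nonempty subset of G. Then the image φ(⟨X⟩) of the subgroup generated by X equals the subgroup of G' generated by φ(X). -/

import Mathlib

theorem stmt_4 {G G' : Type*} [Group G] [Group G'] (φ : G → G')
    (hbij : Function.Bijective φ)
    (hhalf : ∀ x y : G, φ (x * y) = φ x * φ y ∨ φ (x * y) = φ y * φ x)
    (X : Set G) (hX : X.Nonempty) :
    φ '' (Subgroup.closure X : Set G) = (Subgroup.closure (φ '' X) : Set G') := by
  have hone : φ 1 = 1 := by
    rcases hhalf 1 1 with h | h <;>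
    · rw [mul_one] at h
      exact (right_eq_mul.mp h)
  have hinv : ∀ x : G, φ x⁻¹ = (φ x)⁻¹ := by
    intro x
    rcases hhalf x x⁻¹ with h | h
    · rw [mul_inv_cancel, hone] at h
      exact (inv_eq_of_mul_eq_one_right h.symm).symm
    · rw [mul_inv_cancel, hone] at h
      exact eq_inv_of_mul_eq_one_left h.symm
  -- key lemma: φ a * φ b ∈ {φ (a*b), φ (b*a)}
  have key : ∀ a b : G, φ a * φ b = φ (a * b) ∨ φ a * φ b = φ (b * a) := by
    intro a b
    rcases hhalf a b with h1 | h1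
    · exact Or.inl h1.symm
    rcases (hhalf b a).symm with h2 | h2
    · exact Or.inr h2.symm
    -- bad case: φ(ab) = φ(ba) = φ b * φ a; show φ a * φ b = φ b * φ a
    have hc : a * b = b * a := hbij.injective (h1.trans h2.symm)
    suffices hcomm : φ a * φ b = φ b * φ a by
      exact Or.inl (hcomm.trans h1.symm)
    set u := φ a
    set v := φ b
    have hsq : φ (a * a) = u * u := by
      rcases hhalf a a with h | h <;> exact h
    -- φ (a * a * b) = v * u * u
    have haab : φ (a * a * b) = v * (u * u) := by
      have e1 : φ (a * (a * b)) = u * (v * u) ∨ φ (a * (a * b)) = v * u * u := by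
        rcases hhalf a (a * b) with h | h
        · left; rw [h, h1]
        · right; rw [h, h1]
      have e2 : φ (a * a * b) = u * u * v ∨ φ (a * a * b) = v * (u * u) := by
        rcases hhalf (a * a) b with h | h
        · left; rw [h, hsq]
        · right; rw [h, hsq]
      rw [← mul_assoc] at e1
      rcases e2 with h | h
      · rcases e1 with h' | h'
        · -- u u v = u (v u)  ⇒  u v = v u
          have : u * u * v = u * (v * u) := h.symm.trans h'
          rw [mul_assoc] at this
          have := mul_left_cancel this
          -- this : u * v = v * u
          rw [h]
          -- goal : u * u * v = v * (u * u)
          rw [mul_assoc, this, ← mul_assoc, this, mul_assoc]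
        · have : u * u * v = v * u * u := h.symm.trans h'
          rw [h, this]; group
      · exact h
    -- (a*b)*(a*b) = (a*a*b)*b
    have hprod : (a * b) * (a * b) = (a * a * b) * b := by
      calc (a * b) * (a * b) = a * ((b * a) * b) := by group
        _ = a * ((a * b) * b) := by rw [← hc]
        _ = (a * a * b) * b := by group
    have habab : φ ((a * b) * (a * b)) = (v * u) * (v * u) := by
      rcases hhalf (a * b) (a * b) with h | h <;> rw [h, h1]
    rw [hprod] at habab
    rcases hhalf (a * a * b) b with h | h
    · -- v u v u = v u u v
      have : (v * u) * (v * u) = v * (u * u) * v := by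
        rw [← habab, h, haab]
      have h' : u * (v * u) = u * (u * v) := by
        rw [mul_assoc, mul_assoc] at this
        have := mul_left_cancel this
        rw [this]; group
      have h'' : v * u = u * v := mul_left_cancel h'
      exact h''.symm
    · -- v u v u = v (v u u)
      have : (v * u) * (v * u) = v * (v * (u * u)) := by
        rw [← habab, h, haab]
      have h' : u * (v * u) = v * (u * u) := by
        rw [mul_assoc] at this
        exact mul_left_cancel this
      -- u v u = v u u ⇒ u v = v u
      have h'' : (u * v) * u = (v * u) * u := by
        rw [mul_assoc, h', mul_assoc]
      exact mul_right_cancel h''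
  -- the image of the closure is a subgroup
  let K : Subgroup G' :=
    { carrier := φ '' (Subgroup.closure X : Set G)
      one_mem' := ⟨1, Subgroup.one_mem _, hone⟩
      mul_mem' := by
        rintro _ _ ⟨a, ha, rfl⟩ ⟨b, hb, rfl⟩
        rcases key a b with h | h
        · exact ⟨a * b, Subgroup.mul_mem _ ha hb, h.symm⟩
        · exact ⟨b * a, Subgroup.mul_mem _ hb ha, h.symm⟩
      inv_mem' := by
        rintro _ ⟨a, ha, rfl⟩
        exact ⟨a⁻¹, Subgroup.inv_mem _ ha, hinv a⟩ }
  apply Set.Subset.antisymm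
  · rintro _ ⟨x, hx, rfl⟩
    have hx' : x ∈ Subgroup.closure X := hx
    clear hx
    induction hx' using Subgroup.closure_induction with
    | mem y hy => exact Subgroup.subset_closure ⟨y, hy, rfl⟩
    | one => rw [hone]; exact Subgroup.one_mem _
    | mul y z hy hz ihy ihz =>
        rcases hhalf y z with h | h
        · rw [h]; exact Subgroup.mul_mem _ ihy ihz
        · rw [h]; exact Subgroup.mul_mem _ ihz ihy
    | inv y hy ihy => rw [hinv]; exact Subgroup.inv_mem _ ihy
  · have : Subgroup.closure (φ '' X) ≤ K := by
      rw [Subgroup.closure_le]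
      rintro _ ⟨x, hx, rfl⟩
      exact ⟨x, Subgroup.subset_closure hx, rfl⟩
    exact this
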